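/- For n ≥ 3, the set L_n of possible region counts of n distinct lines in the plane contains n+1, 2n, 3n−3, and 3n−2, where n+1 is the minimum (all lines parallel would give n+1; concurrent lines give 2n). -/

import Mathlib

noncomputable section

/-- The number of connected components of the complement of `S`. -/
def regionCount {X : Type*} [TopologicalSpace X] (S : Set X) : ℕ :=
  Nat.card (ConnectedComponents ↥(Sᶜ))

/-- A line in the plane `ℝ²`. -/
def IsLine (L : Set (ℝ × ℝ)) : Prop :=
  ∃ a b c : ℝ, (a, b) ≠ (0, 0) ∧ L = {p : ℝ × ℝ | a * p.1 + b * p.2 = c}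

/-- A circle in the plane `ℝ²`. -/
def IsCircle (S : Set (ℝ × ℝ)) : Prop :=
  ∃ (o : ℝ × ℝ) (r : ℝ), 0 < r ∧
    S = {p : ℝ × ℝ | (p.1 - o.1) ^ 2 + (p.2 - o.2) ^ 2 = r ^ 2}

/-- An arrangement of lines is in general position if every two lines meet
(no two parallel) and no three are concurrent. -/
def LinesGenPos {n : ℕ} (ℓ : Fin n → Set (ℝ × ℝ)) : Prop :=
  (∀ i j, i ≠ j → (ℓ i ∩ ℓ j).Nonempty) ∧
    (∀ i j k, i ≠ j → j ≠ k → i ≠ k → ℓ i ∩ ℓ j ∩ ℓ k = ∅)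

/-- An arrangement of circles is in general position if every two circles cross
in exactly two points and no three circles are concurrent. -/
def CirclesGenPos {n : ℕ} (c : Fin n → Set (ℝ × ℝ)) : Prop :=
  (∀ i j, i ≠ j → Nat.card ↥(c i ∩ c j) = 2) ∧
    (∀ i j k, i ≠ j → j ≠ k → i ≠ k → c i ∩ c j ∩ c k = ∅)

/-- `Lset n`: possible numbers of regions of `n` distinct lines in the plane. -/
def Lset (n : ℕ) : Set ℕ :=
  {f | ∃ ℓ : Fin n → Set (ℝ × ℝ), (∀ i, IsLine (ℓ i)) ∧ Function.Injective ℓ ∧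
    f = regionCount (⋃ i, ℓ i)}

/-- `Cset n`: possible numbers of regions of `n` distinct circles in the plane,
not in general position, every two of which share at least one point. -/
def Cset (n : ℕ) : Set ℕ :=
  {f | ∃ c : Fin n → Set (ℝ × ℝ), (∀ i, IsCircle (c i)) ∧ Function.Injective c ∧
    (∀ i j, i ≠ j → (c i ∩ c j).Nonempty) ∧ ¬ CirclesGenPos c ∧
    f = regionCount (⋃ i, c i)}

/-- Inversion of the plane with center `O` and radius `r`. -/
def inversion (O : ℝ × ℝ) (r : ℝ) (P : ℝ × ℝ) : ℝ × ℝ :=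
  (O.1 + r ^ 2 * (P.1 - O.1) / ((P.1 - O.1) ^ 2 + (P.2 - O.2) ^ 2),
   O.2 + r ^ 2 * (P.2 - O.2) / ((P.1 - O.1) ^ 2 + (P.2 - O.2) ^ 2))

namespace Aux

def lin (a b : ℝ) (p : ℝ × ℝ) : ℝ := a * p.1 + b * p.2

def fl (a b c : ℝ) : Set (ℝ × ℝ) := {p : ℝ × ℝ | a * p.1 + b * p.2 = c}

variable {n : ℕ}

def acell (a b c : Fin n → ℝ) (s : Fin n → Bool) : Set (ℝ × ℝ) :=
  {p | ∀ i, if s i then c i < a i * p.1 + b i * p.2 else a i * p.1 + b i * p.2 < c i}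

def dk (n k : ℕ) : Fin n → Bool := fun i => decide (i.val < k)
def uk (n k : ℕ) : Fin n → Bool := fun i => decide (k ≤ i.val)


theorem lin_isLinear (a b : ℝ) : IsLinearMap ℝ (lin a b) := by
  constructor <;> intro x y <;> simp [lin, Prod.fst_add, Prod.snd_add, smul_eq_mul] <;> ring

theorem lin_continuous (a b : ℝ) : Continuous (lin a b) := by
  unfold lin; fun_prop

theorem acell_convex (a b c : Fin n → ℝ) (s : Fin n → Bool) : Convex ℝ (acell a b c s) := by
  have : acell a b c s = ⋂ i, (if s i then {p | c i < lin (a i) (b i) p} else {p | lin (a i) (b i) p < c i}) := by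
    ext p; simp only [acell, Set.mem_iInter, Set.mem_setOf_eq]
    refine forall_congr' fun i => ?_
    cases s i <;> simp [lin]
  rw [this]
  refine convex_iInter fun i => ?_
  split
  · exact convex_halfSpace_gt (lin_isLinear _ _) _
  · exact convex_halfSpace_lt (lin_isLinear _ _) _

theorem acell_open (a b c : Fin n → ℝ) (s : Fin n → Bool) : IsOpen (acell a b c s) := by
  have : acell a b c s = ⋂ i, (if s i then {p | c i < lin (a i) (b i) p} else {p | lin (a i) (b i) p < c i}) := by
    ext p; simp only [acell, Set.mem_iInter, Set.mem_setOf_eq]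
    refine forall_congr' fun i => ?_
    cases s i <;> simp [lin]
  rw [this]
  refine isOpen_iInter_of_finite fun i => ?_
  split
  · exact isOpen_lt continuous_const (lin_continuous _ _)
  · exact isOpen_lt (lin_continuous _ _) continuous_const

def sgn (a b c : Fin n → ℝ) (p : ℝ × ℝ) : Fin n → Bool := fun i => decide (c i < a i * p.1 + b i * p.2)

theorem compl_union_eq (a b c : Fin n → ℝ) :
    (⋃ i, fl (a i) (b i) (c i))ᶜ = {p | ∀ i, a i * p.1 + b i * p.2 ≠ c i} := by
  ext p; simp [fl]

theorem mem_acell_sgn {a b c : Fin n → ℝ} {p : ℝ × ℝ}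
    (hp : ∀ i, a i * p.1 + b i * p.2 ≠ c i) : p ∈ acell a b c (sgn a b c p) := by
  intro i
  by_cases h : c i < a i * p.1 + b i * p.2
  · simp [sgn, h]
  · have : a i * p.1 + b i * p.2 < c i := lt_of_le_of_ne (not_lt.1 h) (hp i)
    simp [sgn, not_lt.2 this.le, this, not_lt_of_gt this]

theorem acell_subset_compl (a b c : Fin n → ℝ) (s : Fin n → Bool) :
    acell a b c s ⊆ (⋃ i, fl (a i) (b i) (c i))ᶜ := by
  intro p hp
  rw [compl_union_eq]
  intro i
  have := hp i
  split at this <;> [exact ne_of_gt this; exact ne_of_lt this]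

theorem sgn_eq_of_mem {a b c : Fin n → ℝ} {s : Fin n → Bool} {p : ℝ × ℝ}
    (hp : p ∈ acell a b c s) : sgn a b c p = s := by
  funext i
  have := hp i
  cases h : s i
  · rw [h] at this; simp only [Bool.false_eq_true, if_false] at this
    simp [sgn, not_lt_of_gt this]
  · rw [h] at this; simp only [if_true] at this
    simp [sgn, this]

/-- The key topological lemma. -/
theorem card_components (a b c : Fin n → ℝ) :
    Nat.card (ConnectedComponents ↥((⋃ i, fl (a i) (b i) (c i))ᶜ)) =
      Nat.card {s : Fin n → Bool // (acell a b c s).Nonempty} := by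
  set K : Set (ℝ × ℝ) := (⋃ i, fl (a i) (b i) (c i))ᶜ with hK
  have hmem : ∀ p : ℝ × ℝ, p ∈ K → ∀ i, a i * p.1 + b i * p.2 ≠ c i := by
    intro p hp
    have : p ∈ (⋃ i, fl (a i) (b i) (c i))ᶜ := hp
    rw [compl_union_eq] at this; exact this
  -- the sign map on the subtype
  set F : ↥K → {s : Fin n → Bool // (acell a b c s).Nonempty} :=
    fun p => ⟨sgn a b c p.1, ⟨p.1, mem_acell_sgn (hmem p.1 p.2)⟩⟩ with hF
  have hfib : ∀ y, F ⁻¹' {y} = Subtype.val ⁻¹' (acell a b c y.1) := by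
    rintro ⟨s, hs⟩
    ext ⟨p, hp⟩
    simp only [Set.mem_preimage, Set.mem_singleton_iff, hF, Subtype.mk.injEq]
    constructor
    · intro h; have h' : sgn a b c p = s := congrArg Subtype.val h; rw [← h']; exact mem_acell_sgn (hmem p hp)
    · intro h; exact Subtype.ext (sgn_eq_of_mem h)
  have hFc : Continuous F := by
    have : IsLocallyConstant F := by
      rw [IsLocallyConstant.iff_isOpen_fiber]
      intro y
      rw [hfib y]
      exact (acell_open a b c y.1).preimage continuous_subtype_val
    exact this.continuous
  have hsame : ∀ (p q : ↥K), sgn a b c p.1 = sgn a b c q.1 →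
      (ConnectedComponents.mk p = ConnectedComponents.mk q) := by
    rintro ⟨p, hp⟩ ⟨q, hq⟩ hpq
    set s := sgn a b c p with hs
    have hps : p ∈ acell a b c s := mem_acell_sgn (hmem p hp)
    have hqs : q ∈ acell a b c s := by
      have := mem_acell_sgn (hmem q hq)
      rwa [← hpq] at this
    have hconn : IsPreconnected (acell a b c s) := (acell_convex a b c s).isPreconnected
    set t : Set ↥K := Subtype.val ⁻¹' (acell a b c s) with ht
    have himg : Subtype.val '' t = acell a b c s := by
      apply Set.Subset.antisymm
      · rintro x ⟨y, hy, rfl⟩; exact hy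
      · intro x hx
        exact ⟨⟨x, acell_subset_compl a b c s hx⟩, hx, rfl⟩
    have htconn : IsPreconnected t := by
      rw [← Topology.IsInducing.subtypeVal.isPreconnected_image, himg]; exact hconn
    have h1 : (⟨q, hq⟩ : ↥K) ∈ connectedComponent ⟨p, hp⟩ :=
      htconn.subset_connectedComponent hps hqs
    exact ((ConnectedComponents.coe_eq_coe').2 h1).symm
  -- now bijectivity of the lift
  have hsurj : Function.Surjective hFc.connectedComponentsLift := by
    rintro ⟨s, p, hp⟩
    refine ⟨ConnectedComponents.mk ⟨p, acell_subset_compl a b c s hp⟩, ?_⟩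
    rw [show ConnectedComponents.mk (⟨p, acell_subset_compl a b c s hp⟩ : ↥K) =
      ((⟨p, acell_subset_compl a b c s hp⟩ : ↥K) : ConnectedComponents ↥K) from rfl,
      hFc.connectedComponentsLift_apply_coe]
    exact Subtype.ext (sgn_eq_of_mem hp)
  have hinj : Function.Injective hFc.connectedComponentsLift := by
    intro x y hxy
    obtain ⟨p, rfl⟩ := ConnectedComponents.surjective_coe x
    obtain ⟨q, rfl⟩ := ConnectedComponents.surjective_coe y
    rw [hFc.connectedComponentsLift_apply_coe, hFc.connectedComponentsLift_apply_coe] at hxy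
    exact hsame p q (congrArg Subtype.val hxy)
  exact Nat.card_congr (Equiv.ofBijective _ ⟨hinj, hsurj⟩)

theorem uk_zero : uk n 0 = dk n n := by
  funext i; simp [uk, dk, i.isLt]

theorem uk_n : uk n n = dk n 0 := by
  funext i; simp [uk, dk, Nat.not_lt.2 (le_refl n)]

theorem thrT {t : ℝ} (ht : ∀ i : Fin n, t ≠ (i.val : ℝ)) :
    ∃ k ≤ n, ∀ i : Fin n, ((i.val : ℝ) < t ↔ i.val < k) := by
  by_cases h0 : t < 0
  · refine ⟨0, Nat.zero_le n, fun i => ?_⟩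
    simp only [Nat.not_lt_zero, iff_false, not_lt]
    exact le_trans h0.le (by positivity)
  · push_neg at h0
    refine ⟨min n (⌊t⌋₊ + 1), min_le_left _ _, fun i => ?_⟩
    constructor
    · intro h
      have h1 : i.val ≤ ⌊t⌋₊ := Nat.le_floor h.le
      exact lt_min i.isLt (Nat.lt_succ_of_le h1)
    · intro h
      have h1 : i.val < ⌊t⌋₊ + 1 := lt_of_lt_of_le h (min_le_right _ _)
      have h2 : (i.val : ℝ) ≤ t := le_trans (by exact_mod_cast Nat.cast_le.2 (Nat.lt_succ_iff.1 h1) : (i.val:ℝ) ≤ (⌊t⌋₊:ℝ)) (Nat.floor_le h0)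
      exact h2.lt_of_ne (fun he => ht i he.symm)

theorem thrT' {t : ℝ} : ∃ k ≤ n, ∀ i : Fin n, (t < (i.val : ℝ) ↔ k ≤ i.val) := by
  by_cases h0 : t < 0
  · refine ⟨0, Nat.zero_le n, fun i => ?_⟩
    simp only [Nat.zero_le, iff_true]
    exact lt_of_lt_of_le h0 (by positivity)
  · push_neg at h0
    refine ⟨min n (⌊t⌋₊ + 1), min_le_left _ _, fun i => ?_⟩
    constructor
    · intro h
      have h1 : ⌊t⌋₊ < i.val := by
        have : (⌊t⌋₊ : ℝ) < (i.val : ℝ) := lt_of_le_of_lt (Nat.floor_le h0) h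
        exact_mod_cast this
      exact le_trans (min_le_right _ _) h1
    · intro h
      rcases min_cases n (⌊t⌋₊ + 1) with ⟨he, _⟩ | ⟨he, _⟩
      · omega
      · rw [he] at h
        calc t < (⌊t⌋₊ : ℝ) + 1 := Nat.lt_floor_add_one t
        _ ≤ (i.val : ℝ) := by exact_mod_cast Nat.cast_le.2 h

theorem card_subtype_eq {P : (Fin n → Bool) → Prop} {S : Finset (Fin n → Bool)}
    (h : ∀ s, P s ↔ s ∈ S) : Nat.card {s // P s} = S.card := by
  rw [Nat.card_congr (Equiv.subtypeEquivRight (fun s => h s)), Nat.card_eq_finsetCard]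

theorem dk_inj {k1 k2 : ℕ} (h1 : k1 ≤ n) (h2 : k2 ≤ n) (h : dk n k1 = dk n k2) : k1 = k2 := by
  by_contra hne
  rcases Nat.lt_or_ge k1 k2 with hlt | hge
  · have hi : k1 < n := lt_of_lt_of_le hlt h2
    have := congrFun h ⟨k1, hi⟩
    simp [dk, hlt] at this
  · have hlt : k2 < k1 := by omega
    have hi : k2 < n := lt_of_lt_of_le hlt h1
    have := congrFun h ⟨k2, hi⟩
    simp [dk, hlt] at this

/-- characterization for parallel lines y = i -/
theorem par_char (s : Fin n → Bool) :
    (acell (fun _ => (0:ℝ)) (fun _ => (1:ℝ)) (fun i => (i.val : ℝ)) s).Nonempty ↔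
      s ∈ (Finset.range (n+1)).image (dk n) := by
  constructor
  · rintro ⟨p, hp⟩
    have hcond : ∀ i : Fin n, s i = true ↔ (i.val : ℝ) < p.2 := by
      intro i
      have := hp i
      constructor
      · intro hi; rw [hi] at this; simpa using this
      · intro hi; by_contra hne
        have hfalse : s i = false := by simpa using hne
        rw [hfalse] at this; simp at this; linarith
    have ht : ∀ i : Fin n, p.2 ≠ (i.val : ℝ) := by
      intro i he
      have := hp i
      rcases Bool.eq_false_or_eq_true (s i) with h | h <;> rw [h] at this <;> simp at this <;> linarith
    obtain ⟨k, hk, hkk⟩ := thrT ht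
    simp only [Finset.mem_image, Finset.mem_range]
    refine ⟨k, by omega, ?_⟩
    funext i
    have hiff : s i = true ↔ i.val < k := (hcond i).trans (hkk i)
    by_cases hik : i.val < k
    · simp [dk, hik, hiff.2 hik]
    · have : s i = false := by rw [← Bool.not_eq_true]; exact fun h => hik (hiff.1 h)
      simp [dk, hik, this]
  · rintro hs
    simp only [Finset.mem_image, Finset.mem_range] at hs
    obtain ⟨k, hk, rfl⟩ := hs
    refine ⟨((0:ℝ), (k:ℝ) - 1/2), ?_⟩
    intro i
    rcases Nat.lt_or_ge i.val k with h | h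
    · have : (dk n k) i = true := by simp [dk, h]
      rw [this]; simp only [if_true]
      have : (i.val : ℝ) ≤ (k:ℝ) - 1 := by
        have : (i.val : ℕ) + 1 ≤ k := h
        have := (Nat.cast_le (α := ℝ)).2 this
        push_cast at this; linarith
      simp; linarith
    · have : (dk n k) i = false := by simp [dk]; omega
      rw [this]; simp only [Bool.false_eq_true, if_false]
      have : (k : ℝ) ≤ (i.val : ℝ) := (Nat.cast_le (α := ℝ)).2 h
      simp; linarith

theorem par_count : Nat.card {s : Fin n → Bool //
    (acell (fun _ => (0:ℝ)) (fun _ => (1:ℝ)) (fun i => (i.val : ℝ)) s).Nonempty} = n + 1 := by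
  rw [card_subtype_eq par_char, Finset.card_image_of_injOn, Finset.card_range]
  intro k1 h1 k2 h2 h
  exact dk_inj (by simpa using Nat.lt_succ_iff.1 (Finset.mem_range.1 h1))
    (by simpa using Nat.lt_succ_iff.1 (Finset.mem_range.1 h2)) h

theorem cell_iff {a b c : Fin n → ℝ} {s : Fin n → Bool} {p : ℝ × ℝ} (hp : p ∈ acell a b c s) (i : Fin n) :
    (s i = true ↔ c i < a i * p.1 + b i * p.2) ∧ a i * p.1 + b i * p.2 ≠ c i := by
  have H := hp i
  cases hb : s i <;> rw [hb] at H <;> simp only [if_true, Bool.false_eq_true, if_false] at H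
  · exact ⟨⟨fun h => by simp at h, fun h => absurd H (by linarith)⟩, ne_of_lt H⟩
  · exact ⟨⟨fun _ => H, fun _ => rfl⟩, (ne_of_lt H).symm⟩

theorem uk_inj {k1 k2 : ℕ} (h1 : k1 ≤ n) (h2 : k2 ≤ n) (h : uk n k1 = uk n k2) : k1 = k2 := by
  by_contra hne
  wlog hlt : k1 < k2 generalizing k1 k2
  · exact this h2 h1 h.symm (Ne.symm hne) (by omega)
  · have hi : k1 < n := by omega
    have := congrFun h ⟨k1, hi⟩
    simp [uk] at this; omega

theorem dk_ne_uk (hn : 1 ≤ n) {k1 k2 : ℕ} (hk2a : 1 ≤ k2) (hk2b : k2 ≤ n-1) :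
    dk n k1 ≠ uk n k2 := by
  intro h
  have h0 := congrFun h ⟨0, hn⟩
  have h1 := congrFun h ⟨n-1, by omega⟩
  simp [dk, uk] at h0 h1
  omega

/-- pencil pattern, positive x -/
theorem pencil_pos {m : ℕ} (hmn : m ≤ n) {s : Fin n → Bool} {x y : ℝ} (hx : 0 < x)
    (hcond : ∀ i : Fin n, i.val < m → (s i = true ↔ (i.val:ℝ) * x < y))
    (hne : ∀ i : Fin n, i.val < m → (i.val:ℝ) * x ≠ y) :
    ∃ k ≤ m, ∀ i : Fin n, i.val < m → (s i = true ↔ i.val < k) := by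
  have ht : ∀ j : Fin m, y / x ≠ (j.val:ℝ) := by
    intro j he
    exact hne ⟨j.val, lt_of_lt_of_le j.isLt hmn⟩ j.isLt
      (by rw [div_eq_iff hx.ne'] at he; linear_combination -he)
  obtain ⟨k, hk, hkk⟩ := thrT (n := m) ht
  refine ⟨k, hk, fun i hi => ?_⟩
  rw [hcond i hi]
  have h2 := hkk ⟨i.val, hi⟩
  simp only at h2
  rw [← h2, lt_div_iff₀ hx]

/-- pencil pattern, negative x -/
theorem pencil_neg {m : ℕ} (hmn : m ≤ n) {s : Fin n → Bool} {x y : ℝ} (hx : x < 0)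
    (hcond : ∀ i : Fin n, i.val < m → (s i = true ↔ (i.val:ℝ) * x < y)) :
    ∃ k ≤ m, ∀ i : Fin n, i.val < m → (s i = true ↔ k ≤ i.val) := by
  obtain ⟨k, hk, hkk⟩ := thrT' (n := m) (t := y / x)
  refine ⟨k, hk, fun i hi => ?_⟩
  rw [hcond i hi]
  have h2 := hkk ⟨i.val, hi⟩
  simp only at h2
  rw [← h2, div_lt_iff_of_neg hx]

def SC2 (n : ℕ) : Finset (Fin n → Bool) :=
  ((Finset.range (n+1)).image (dk n)) ∪ ((Finset.Icc 1 (n-1)).image (uk n))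

theorem uk_mem_SC2 {k : ℕ} (hk : k ≤ n) : uk n k ∈ SC2 n := by
  rcases Nat.eq_zero_or_pos k with rfl | hk1
  · apply Finset.mem_union_left
    refine Finset.mem_image.2 ⟨n, Finset.mem_range.2 (by omega), ?_⟩
    funext i; simp [uk, dk, i.isLt]
  · rcases Nat.lt_or_ge k n with hk2 | hk2
    · exact Finset.mem_union_right _ (Finset.mem_image.2 ⟨k, Finset.mem_Icc.2 ⟨hk1, by omega⟩, rfl⟩)
    · have : k = n := le_antisymm hk hk2
      subst this
      apply Finset.mem_union_left
      refine Finset.mem_image.2 ⟨0, Finset.mem_range.2 (by omega), ?_⟩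
      funext i; simp [uk, dk, Nat.not_le.2 i.isLt]

theorem dk_mem_SC2 {k : ℕ} (hk : k ≤ n) : dk n k ∈ SC2 n :=
  Finset.mem_union_left _ (Finset.mem_image.2 ⟨k, Finset.mem_range.2 (by omega), rfl⟩)

theorem conc_char (hn : 1 ≤ n) (s : Fin n → Bool) :
    (acell (fun i => -(i.val:ℝ)) (fun _ => (1:ℝ)) (fun _ => (0:ℝ)) s).Nonempty ↔ s ∈ SC2 n := by
  constructor
  · rintro ⟨p, hp⟩
    have hcond : ∀ i : Fin n, s i = true ↔ (i.val:ℝ) * p.1 < p.2 := by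
      intro i
      have := (cell_iff hp i).1
      constructor
      · intro h; have := this.1 h; linarith
      · intro h; exact this.2 (by linarith)
    have hne : ∀ i : Fin n, (i.val:ℝ) * p.1 ≠ p.2 := by
      intro i he
      exact (cell_iff hp i).2 (by linarith)
    rcases lt_trichotomy p.1 0 with hx | hx | hx
    · obtain ⟨k, hk, hkk⟩ := pencil_neg (le_refl n) hx (fun i _ => hcond i)
      have : s = uk n k := by
        funext i
        cases hb : s i
        · have := (hkk i i.isLt); simp [uk, hb] at this ⊢; omega
        · have := (hkk i i.isLt).1 hb; simp [uk, this]
      rw [this]; exact uk_mem_SC2 hk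
    · -- x = 0
      have hy : p.2 ≠ 0 := by
        have := hne ⟨0, hn⟩; simpa [hx] using fun h => this (by simp [hx, h])
      rcases lt_or_gt_of_ne hy with hy | hy
      · have : s = dk n 0 := by
          funext i
          have := hcond i
          rw [hx] at this; simp at this
          have : s i = false := by
            rw [← Bool.not_eq_true]; intro hb; have := this.1 hb; linarith
          simp [dk, this]
        rw [this]; exact dk_mem_SC2 (by omega)
      · have : s = dk n n := by
          funext i
          have h2 := hcond i
          rw [hx] at h2; simp at h2
          simp [dk, i.isLt, h2.2 hy]
        rw [this]; exact dk_mem_SC2 (le_refl n)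
    · obtain ⟨k, hk, hkk⟩ := pencil_pos (le_refl n) hx (fun i _ => hcond i) (fun i _ => hne i)
      have : s = dk n k := by
        funext i
        cases hb : s i
        · have := (hkk i i.isLt); simp [dk, hb] at this ⊢; omega
        · have := (hkk i i.isLt).1 hb; simp [dk, this]
      rw [this]; exact dk_mem_SC2 hk
  · intro hs
    rcases Finset.mem_union.1 hs with h | h
    · obtain ⟨k, hk, rfl⟩ := Finset.mem_image.1 h
      rw [Finset.mem_range] at hk
      refine ⟨((2:ℝ), 2*(k:ℝ)-1), ?_⟩
      intro i
      rcases Nat.lt_or_ge i.val k with h | h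
      · have hb : dk n k i = true := by simp [dk, h]
        rw [hb]; simp only [if_true]
        have : (i.val:ℝ) ≤ (k:ℝ) - 1 := by
          have := (Nat.cast_le (α := ℝ)).2 h; push_cast at this; linarith
        simp; linarith
      · have hb : dk n k i = false := by simp [dk]; omega
        rw [hb]; simp only [Bool.false_eq_true, if_false]
        have : (k:ℝ) ≤ (i.val:ℝ) := (Nat.cast_le (α := ℝ)).2 h
        simp; linarith
    · obtain ⟨k, hk, rfl⟩ := Finset.mem_image.1 h
      rw [Finset.mem_Icc] at hk
      refine ⟨((-2:ℝ), -(2*(k:ℝ)-1)), ?_⟩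
      intro i
      rcases Nat.lt_or_ge i.val k with h | h
      · have hb : uk n k i = false := by simp [uk]; omega
        rw [hb]; simp only [Bool.false_eq_true, if_false]
        have : (i.val:ℝ) ≤ (k:ℝ) - 1 := by
          have := (Nat.cast_le (α := ℝ)).2 h; push_cast at this; linarith
        simp; linarith
      · have hb : uk n k i = true := by simp [uk, h]
        rw [hb]; simp only [if_true]
        have : (k:ℝ) ≤ (i.val:ℝ) := (Nat.cast_le (α := ℝ)).2 h
        simp; linarith

theorem conc_count (hn : 1 ≤ n) : Nat.card {s : Fin n → Bool //
    (acell (fun i => -(i.val:ℝ)) (fun _ => (1:ℝ)) (fun _ => (0:ℝ)) s).Nonempty} = 2*n := by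
  rw [card_subtype_eq (conc_char hn)]
  unfold SC2
  rw [Finset.card_union_of_disjoint, Finset.card_image_of_injOn, Finset.card_image_of_injOn,
    Finset.card_range, Nat.card_Icc]
  · omega
  · intro k1 h1 k2 h2 h
    rw [Finset.mem_coe, Finset.mem_Icc] at h1 h2
    exact uk_inj (by omega) (by omega) h
  · intro k1 h1 k2 h2 h
    rw [Finset.mem_coe, Finset.mem_range] at h1 h2
    exact dk_inj (by omega) (by omega) h
  · rw [Finset.disjoint_left]
    rintro a ha hb
    obtain ⟨k1, hk1, rfl⟩ := Finset.mem_image.1 ha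
    obtain ⟨k2, hk2, he⟩ := Finset.mem_image.1 hb
    rw [Finset.mem_range] at hk1; rw [Finset.mem_Icc] at hk2
    exact dk_ne_uk hn hk2.1 hk2.2 he.symm

def dkb (n k : ℕ) (b : Bool) : Fin n → Bool :=
  fun i => if i.val < n-1 then decide (i.val < k) else b
def ukb (n k : ℕ) (b : Bool) : Fin n → Bool :=
  fun i => if i.val < n-1 then decide (k ≤ i.val) else b

/-- coefficients for arrangement D : lines y = i x (i < n-1) and x = 1 -/
def aD (n : ℕ) : Fin n → ℝ := fun i => if i.val < n-1 then -(i.val:ℝ) else 1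
def bD (n : ℕ) : Fin n → ℝ := fun i => if i.val < n-1 then 1 else 0
def cD (n : ℕ) : Fin n → ℝ := fun i => if i.val < n-1 then 0 else 1
/-- coefficients for arrangement C3 : lines y = i x (i < n-1) and y = 1 -/
def aC (n : ℕ) : Fin n → ℝ := fun i => if i.val < n-1 then -(i.val:ℝ) else 0
def bC (n : ℕ) : Fin n → ℝ := fun _ => 1
def cC (n : ℕ) : Fin n → ℝ := fun i => if i.val < n-1 then 0 else 1

theorem ukb_zero : ukb n 0 b = dkb n (n-1) b := by
  funext i; simp only [ukb, dkb]
  by_cases hi : i.val < n-1 <;> simp [hi]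

theorem ukb_last : ukb n (n-1) b = dkb n 0 b := by
  funext i; simp only [ukb, dkb]
  by_cases hi : i.val < n-1 <;> simp [hi] <;> omega

theorem dkb_inj (hn : 1 ≤ n) {k1 k2 : ℕ} {b1 b2 : Bool} (h1 : k1 ≤ n-1) (h2 : k2 ≤ n-1)
    (h : dkb n k1 b1 = dkb n k2 b2) : k1 = k2 ∧ b1 = b2 := by
  constructor
  · by_contra hne
    wlog hlt : k1 < k2 generalizing k1 k2 b1 b2
    · exact this h2 h1 h.symm (by omega) (by omega)
    have hi : k1 < n-1 := by omega
    have := congrFun h ⟨k1, by omega⟩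
    simp only [dkb, hi, if_true] at this
    simp at this; omega
  · have := congrFun h ⟨n-1, by omega⟩
    simpa [dkb] using this

theorem ukb_inj (hn : 1 ≤ n) {k1 k2 : ℕ} {b : Bool} (h1 : k1 ≤ n-1) (h2 : k2 ≤ n-1)
    (h : ukb n k1 b = ukb n k2 b) : k1 = k2 := by
  by_contra hne
  wlog hlt : k1 < k2 generalizing k1 k2
  · exact this h2 h1 h.symm (by omega) (by omega)
  have hi : k1 < n-1 := by omega
  have := congrFun h ⟨k1, by omega⟩
  simp only [ukb, hi, if_true] at this
  simp at this; omega

theorem dkb_ne_ukb (hn : 3 ≤ n) {k1 k2 : ℕ} {b1 b2 : Bool} (hk2a : 1 ≤ k2) (hk2b : k2 ≤ n-2) :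
    dkb n k1 b1 ≠ ukb n k2 b2 := by
  intro h
  have h0 := congrFun h ⟨0, by omega⟩
  have h1 := congrFun h ⟨n-2, by omega⟩
  simp only [dkb, ukb, show (0:ℕ) < n-1 by omega, show n-2 < n-1 by omega, if_true] at h0 h1
  simp at h0 h1; omega

def SD (n : ℕ) : Finset (Fin n → Bool) :=
  ((Finset.range n).image (fun k => dkb n k true)) ∪
    ((Finset.range n).image (fun k => dkb n k false)) ∪
    ((Finset.Icc 1 (n-2)).image (fun k => ukb n k false))

def SC (n : ℕ) : Finset (Fin n → Bool) :=
  ((Finset.Icc 1 (n-1)).image (fun k => dkb n k true)) ∪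
    ((Finset.range n).image (fun k => dkb n k false)) ∪
    ((Finset.Icc 1 (n-2)).image (fun k => ukb n k false))

theorem dkb_mem_SD (hn : 3 ≤ n) {k : ℕ} (hk : k ≤ n-1) (b : Bool) : dkb n k b ∈ SD n := by
  cases b
  · exact Finset.mem_union_left _ (Finset.mem_union_right _
      (Finset.mem_image.2 ⟨k, Finset.mem_range.2 (by omega), rfl⟩))
  · exact Finset.mem_union_left _ (Finset.mem_union_left _
      (Finset.mem_image.2 ⟨k, Finset.mem_range.2 (by omega), rfl⟩))

theorem ukb_mem_SD (hn : 3 ≤ n) {k : ℕ} (hk : k ≤ n-1) : ukb n k false ∈ SD n := by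
  rcases Nat.eq_zero_or_pos k with rfl | hk1
  · rw [ukb_zero]; exact dkb_mem_SD hn (le_refl _) false
  rcases Nat.lt_or_ge k (n-1) with hk2 | hk2
  · exact Finset.mem_union_right _ (Finset.mem_image.2 ⟨k, Finset.mem_Icc.2 ⟨hk1, by omega⟩, rfl⟩)
  · have : k = n-1 := by omega
    subst this; rw [ukb_last]; exact dkb_mem_SD hn (by omega) false

theorem dkb_false_mem_SC (hn : 3 ≤ n) {k : ℕ} (hk : k ≤ n-1) : dkb n k false ∈ SC n :=
  Finset.mem_union_left _ (Finset.mem_union_right _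
    (Finset.mem_image.2 ⟨k, Finset.mem_range.2 (by omega), rfl⟩))

theorem dkb_true_mem_SC (hn : 3 ≤ n) {k : ℕ} (hk1 : 1 ≤ k) (hk : k ≤ n-1) : dkb n k true ∈ SC n :=
  Finset.mem_union_left _ (Finset.mem_union_left _
    (Finset.mem_image.2 ⟨k, Finset.mem_Icc.2 ⟨hk1, hk⟩, rfl⟩))

theorem ukb_mem_SC (hn : 3 ≤ n) {k : ℕ} (hk : k ≤ n-1) : ukb n k false ∈ SC n := by
  rcases Nat.eq_zero_or_pos k with rfl | hk1
  · rw [ukb_zero]; exact dkb_false_mem_SC hn (le_refl _)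
  rcases Nat.lt_or_ge k (n-1) with hk2 | hk2
  · exact Finset.mem_union_right _ (Finset.mem_image.2 ⟨k, Finset.mem_Icc.2 ⟨hk1, by omega⟩, rfl⟩)
  · have : k = n-1 := by omega
    subst this; rw [ukb_last]; exact dkb_false_mem_SC hn (by omega)


theorem c1 {i k : ℕ} (h : i < k) : (i:ℝ) ≤ (k:ℝ) - 1 := by
  have : (i:ℝ) + 1 ≤ (k:ℝ) := by exact_mod_cast Nat.succ_le_of_lt h
  linarith

theorem c2 {i k : ℕ} (h : k ≤ i) : (k:ℝ) ≤ (i:ℝ) := by exact_mod_cast h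

theorem eq_dkb (hn : 1 ≤ n) {s : Fin n → Bool} {k : ℕ}
    (hpat : ∀ i : Fin n, i.val < n-1 → (s i = true ↔ i.val < k)) :
    s = dkb n k (s ⟨n-1, by omega⟩) := by
  funext i
  by_cases hi : i.val < n-1
  · simp only [dkb, hi, if_true]
    cases hb : s i
    · have := hpat i hi; rw [hb] at this; simp at this
      simp [this]
    · simp [(hpat i hi).1 hb]
  · have he : i = ⟨n-1, by omega⟩ := Fin.ext (by have := i.isLt; simp only at hi ⊢; omega)
    rw [he]; simp [dkb]

theorem eq_ukb (hn : 1 ≤ n) {s : Fin n → Bool} {k : ℕ}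
    (hpat : ∀ i : Fin n, i.val < n-1 → (s i = true ↔ k ≤ i.val)) :
    s = ukb n k (s ⟨n-1, by omega⟩) := by
  funext i
  by_cases hi : i.val < n-1
  · simp only [ukb, hi, if_true]
    cases hb : s i
    · have := hpat i hi; rw [hb] at this; simp at this
      simp; omega
    · simp [(hpat i hi).1 hb]
  · have he : i = ⟨n-1, by omega⟩ := Fin.ext (by have := i.isLt; simp only at hi ⊢; omega)
    rw [he]; simp [ukb]

theorem D_char (hn : 3 ≤ n) (s : Fin n → Bool) :
    (acell (aD n) (bD n) (cD n) s).Nonempty ↔ s ∈ SD n := by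
  have hn1 : (1:ℕ) ≤ n := by omega
  constructor
  · rintro ⟨p, hp⟩
    have hcondP : ∀ i : Fin n, i.val < n-1 → (s i = true ↔ (i.val:ℝ)*p.1 < p.2) := by
      intro i hi
      have H := (cell_iff hp i).1
      simp only [aD, bD, cD, hi, if_true] at H
      constructor
      · intro h; have := H.1 h; linarith
      · intro h; exact H.2 (by linarith)
    have hneP : ∀ i : Fin n, i.val < n-1 → (i.val:ℝ)*p.1 ≠ p.2 := by
      intro i hi he
      have H := (cell_iff hp i).2
      simp only [aD, bD, cD, hi, if_true] at H
      exact H (by linarith)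
    set L : Fin n := ⟨n-1, by omega⟩ with hLdef
    have hLv : ¬(L.val < n-1) := by show ¬ (n-1 < n-1); omega
    have HL := cell_iff hp L
    simp only [aD, bD, cD, if_neg hLv] at HL
    have hL1 : s L = true ↔ 1 < p.1 := by
      constructor
      · intro h; have := HL.1.1 h; linarith
      · intro h; exact HL.1.2 (by linarith)
    have hLne : p.1 ≠ 1 := fun he => HL.2 (by rw [he]; ring)
    rcases lt_trichotomy p.1 0 with hx | hx | hx
    · obtain ⟨k, hk, hkk⟩ := pencil_neg (m := n-1) (by omega) hx hcondP
      have hsL : s L = false := by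
        rw [← Bool.not_eq_true, hL1]; intro h; linarith
      have he := eq_ukb hn1 hkk
      rw [← hLdef, hsL] at he
      rw [he]; exact ukb_mem_SD hn hk
    · have hy : p.2 ≠ 0 := by
        intro h
        exact hneP ⟨0, by omega⟩ (by simp; omega) (by rw [hx, h]; ring)
      have hsL : s L = false := by
        rw [← Bool.not_eq_true, hL1]; intro h; linarith
      rcases lt_or_gt_of_ne hy with hy | hy
      · have hpat : ∀ i : Fin n, i.val < n-1 → (s i = true ↔ i.val < 0) := by
          intro i hi
          rw [hcondP i hi, hx]
          simp only [mul_zero, Nat.not_lt_zero, iff_false, not_lt]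
          linarith
        have he := eq_dkb hn1 hpat
        rw [← hLdef, hsL] at he
        rw [he]; exact dkb_mem_SD hn (by omega) false
      · have hpat : ∀ i : Fin n, i.val < n-1 → (s i = true ↔ i.val < n-1) := by
          intro i hi
          rw [hcondP i hi, hx]
          simp [hi, hy]
        have he := eq_dkb hn1 hpat
        rw [← hLdef, hsL] at he
        rw [he]; exact dkb_mem_SD hn (by omega) false
    · obtain ⟨k, hk, hkk⟩ := pencil_pos (m := n-1) (by omega) hx hcondP hneP
      have he := eq_dkb hn1 hkk
      rw [← hLdef] at he
      rw [he]; exact dkb_mem_SD hn hk _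
  · intro hs
    rcases Finset.mem_union.1 hs with hs' | hs'
    · rcases Finset.mem_union.1 hs' with h | h
      · -- dkb k true : witness (2, 2k - 1/2)
        obtain ⟨k, hk, rfl⟩ := Finset.mem_image.1 h
        refine ⟨((2:ℝ), 2*(k:ℝ) - 1/2), ?_⟩
        intro i
        by_cases hi : i.val < n-1
        · rcases Nat.lt_or_ge i.val k with h' | h'
          · have hb : dkb n k true i = true := by simp [dkb, hi, h']
            rw [hb]; simp only [if_true, aD, bD, cD, hi]
            simp; have := c1 h'; linarith
          · have hb : dkb n k true i = false := by simp [dkb, hi]; omega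
            rw [hb]; simp only [Bool.false_eq_true, if_false, aD, bD, cD, hi, if_true]
            have := c2 h'; simp; linarith
        · have hb : dkb n k true i = true := by simp [dkb, hi]
          rw [hb]; simp only [if_true, aD, bD, cD, hi, if_false]
          norm_num
      · -- dkb k false : witness (1/2, (4k-1)/8)
        obtain ⟨k, hk, rfl⟩ := Finset.mem_image.1 h
        refine ⟨((1/2:ℝ), (4*(k:ℝ)-1)/8), ?_⟩
        intro i
        by_cases hi : i.val < n-1
        · rcases Nat.lt_or_ge i.val k with h' | h'
          · have hb : dkb n k false i = true := by simp [dkb, hi, h']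
            rw [hb]; simp only [if_true, aD, bD, cD, hi]
            simp; have := c1 h'; linarith
          · have hb : dkb n k false i = false := by simp [dkb, hi]; omega
            rw [hb]; simp only [Bool.false_eq_true, if_false, aD, bD, cD, hi, if_true]
            have := c2 h'; simp; linarith
        · have hb : dkb n k false i = false := by simp [dkb, hi]
          rw [hb]; simp only [Bool.false_eq_true, if_false, aD, bD, cD, hi, if_false]
          norm_num
    · -- ukb k false : witness (-2, -(2k - 1/2))
      obtain ⟨k, hk, rfl⟩ := Finset.mem_image.1 hs'
      refine ⟨((-2:ℝ), -(2*(k:ℝ) - 1/2)), ?_⟩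
      intro i
      by_cases hi : i.val < n-1
      · rcases Nat.lt_or_ge i.val k with h' | h'
        · have hb : ukb n k false i = false := by simp [ukb, hi]; omega
          rw [hb]; simp only [Bool.false_eq_true, if_false, aD, bD, cD, hi, if_true]
          have := c1 h'; simp; linarith
        · have hb : ukb n k false i = true := by simp [ukb, hi, h']
          rw [hb]; simp only [if_true, aD, bD, cD, hi]
          have := c2 h'; simp; linarith
      · have hb : ukb n k false i = false := by simp [ukb, hi]
        rw [hb]; simp only [Bool.false_eq_true, if_false, aD, bD, cD, hi, if_false]
        norm_num

theorem C_char (hn : 3 ≤ n) (s : Fin n → Bool) :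
    (acell (aC n) (bC n) (cC n) s).Nonempty ↔ s ∈ SC n := by
  have hn1 : (1:ℕ) ≤ n := by omega
  constructor
  · rintro ⟨p, hp⟩
    have hcondP : ∀ i : Fin n, i.val < n-1 → (s i = true ↔ (i.val:ℝ)*p.1 < p.2) := by
      intro i hi
      have H := (cell_iff hp i).1
      simp only [aC, bC, cC, hi, if_true] at H
      constructor
      · intro h; have := H.1 h; linarith
      · intro h; exact H.2 (by linarith)
    have hneP : ∀ i : Fin n, i.val < n-1 → (i.val:ℝ)*p.1 ≠ p.2 := by
      intro i hi he
      have H := (cell_iff hp i).2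
      simp only [aC, bC, cC, hi, if_true] at H
      exact H (by linarith)
    set L : Fin n := ⟨n-1, by omega⟩ with hLdef
    have hLv : ¬(L.val < n-1) := by show ¬ (n-1 < n-1); omega
    have HL := cell_iff hp L
    simp only [aC, bC, cC, if_neg hLv] at HL
    have hL1 : s L = true ↔ 1 < p.2 := by
      constructor
      · intro h; have := HL.1.1 h; linarith
      · intro h; exact HL.1.2 (by linarith)
    -- key: if the pencil pattern forces y < 0 then s L = false
    rcases lt_trichotomy p.1 0 with hx | hx | hx
    · obtain ⟨k, hk, hkk⟩ := pencil_neg (m := n-1) (by omega) hx hcondP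
      have he := eq_ukb hn1 hkk
      rw [← hLdef] at he
      rcases Nat.eq_zero_or_pos k with rfl | hk1
      · -- all pencil true; both bits allowed
        rw [he, ukb_zero]
        cases hb : s L
        · exact dkb_false_mem_SC hn (le_refl _)
        · exact dkb_true_mem_SC hn (by omega) (le_refl _)
      · -- s 0 = false forces y ≤ 0 hence s L = false
        have h0 : s ⟨0, by omega⟩ = false := by
          rw [← Bool.not_eq_true, hkk ⟨0, by omega⟩ (by simp; omega)]
          simp; omega
        have hy : p.2 < 0 ∨ p.2 = 0 ∨ ¬ (0*p.1 < p.2) := by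
          have := hkk ⟨0, by omega⟩ (by simp; omega)
          right; right
          rw [← Bool.not_eq_true] at h0
          intro hc
          exact h0 (by rw [hcondP ⟨0, by omega⟩ (by simp; omega)]; simpa using hc)
        have hy2 : p.2 ≤ 0 := by
          rcases hy with h | h | h
          · linarith
          · linarith
          · simpa using h
        have hsL : s L = false := by
          rw [← Bool.not_eq_true, hL1]; intro h; linarith
        rw [hsL] at he
        rw [he]; exact ukb_mem_SC hn hk
    · have hy : p.2 ≠ 0 := by
        intro h
        exact hneP ⟨0, by omega⟩ (by simp; omega) (by rw [hx, h]; ring)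
      rcases lt_or_gt_of_ne hy with hy | hy
      · have hpat : ∀ i : Fin n, i.val < n-1 → (s i = true ↔ i.val < 0) := by
          intro i hi
          rw [hcondP i hi, hx]
          simp only [mul_zero, Nat.not_lt_zero, iff_false, not_lt]
          linarith
        have hsL : s L = false := by
          rw [← Bool.not_eq_true, hL1]; intro h; linarith
        have he := eq_dkb hn1 hpat
        rw [← hLdef, hsL] at he
        rw [he]; exact dkb_false_mem_SC hn (by omega)
      · have hpat : ∀ i : Fin n, i.val < n-1 → (s i = true ↔ i.val < n-1) := by
          intro i hi
          rw [hcondP i hi, hx]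
          simp [hi, hy]
        have he := eq_dkb hn1 hpat
        rw [← hLdef] at he
        rw [he]
        cases hb : s L
        · exact dkb_false_mem_SC hn (by omega)
        · exact dkb_true_mem_SC hn (by omega) (by omega)
    · obtain ⟨k, hk, hkk⟩ := pencil_pos (m := n-1) (by omega) hx hcondP hneP
      have he := eq_dkb hn1 hkk
      rw [← hLdef] at he
      rcases Nat.eq_zero_or_pos k with rfl | hk1
      · have h0 : s ⟨0, by omega⟩ = false := by
          rw [← Bool.not_eq_true, hkk ⟨0, by omega⟩ (by simp; omega)]
          simp
        have hy2 : p.2 ≤ 0 := by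
          have hc := hcondP ⟨0, by omega⟩ (by simp; omega)
          rw [← Bool.not_eq_true] at h0
          by_contra hgt
          push_neg at hgt
          exact h0 (hc.2 (by simpa using hgt))
        have hsL : s L = false := by
          rw [← Bool.not_eq_true, hL1]; intro h; linarith
        rw [hsL] at he
        rw [he]; exact dkb_false_mem_SC hn (by omega)
      · rw [he]
        cases hb : s L
        · exact dkb_false_mem_SC hn hk
        · exact dkb_true_mem_SC hn hk1 hk
  · intro hs
    rcases Finset.mem_union.1 hs with hs' | hs'
    · rcases Finset.mem_union.1 hs' with h | h
      · -- dkb k true, 1 ≤ k : witness (2, 2k - 1/2), note 2k - 1/2 ≥ 3/2 > 1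
        obtain ⟨k, hk, rfl⟩ := Finset.mem_image.1 h
        rw [Finset.mem_Icc] at hk
        refine ⟨((2:ℝ), 2*(k:ℝ) - 1/2), ?_⟩
        intro i
        by_cases hi : i.val < n-1
        · rcases Nat.lt_or_ge i.val k with h' | h'
          · have hb : dkb n k true i = true := by simp [dkb, hi, h']
            rw [hb]; simp only [if_true, aC, bC, cC, hi]
            simp; have := c1 h'; linarith
          · have hb : dkb n k true i = false := by simp [dkb, hi]; omega
            rw [hb]; simp only [Bool.false_eq_true, if_false, aC, bC, cC, hi, if_true]
            have := c2 h'; simp; linarith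
        · have hb : dkb n k true i = true := by simp [dkb, hi]
          rw [hb]; simp only [if_true, aC, bC, cC, hi, if_false]
          have : (1:ℝ) ≤ (k:ℝ) := by exact_mod_cast hk.1
          simp; linarith
      · -- dkb k false : witness (1, -1) for k = 0, else (2/(4k-1), 1/2)
        obtain ⟨k, hk, rfl⟩ := Finset.mem_image.1 h
        rcases Nat.eq_zero_or_pos k with rfl | hk1
        · refine ⟨((1:ℝ), (-1:ℝ)), ?_⟩
          intro i
          by_cases hi : i.val < n-1
          · have hb : dkb n 0 false i = false := by simp [dkb, hi]
            rw [hb]; simp only [Bool.false_eq_true, if_false, aC, bC, cC, hi, if_true]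
            have : (0:ℝ) ≤ (i.val:ℝ) := by positivity
            simp; linarith
          · have hb : dkb n 0 false i = false := by simp [dkb, hi]
            rw [hb]; simp only [Bool.false_eq_true, if_false, aC, bC, cC, hi, if_false]
            norm_num
        · have hkpos : (0:ℝ) < 4*(k:ℝ)-1 := by
            have : (1:ℝ) ≤ (k:ℝ) := by exact_mod_cast hk1
            linarith
          refine ⟨((2/(4*(k:ℝ)-1) : ℝ), (1/2:ℝ)), ?_⟩
          intro i
          by_cases hi : i.val < n-1
          · rcases Nat.lt_or_ge i.val k with h' | h'
            · have hb : dkb n k false i = true := by simp [dkb, hi, h']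
              rw [hb]; simp only [if_true, aC, bC, cC, hi]
              have hc := c1 h'
              rw [show -(i.val:ℝ) * (2/(4*(k:ℝ)-1)) + 1 * (1/2:ℝ)
                  = (4*(k:ℝ)-1-4*(i.val:ℝ))/(2*(4*(k:ℝ)-1)) by field_simp; ring]
              have hnum : (0:ℝ) < 4*(k:ℝ)-1-4*(i.val:ℝ) := by linarith
              exact div_pos hnum (by linarith)
            · have hb : dkb n k false i = false := by simp [dkb, hi]; omega
              rw [hb]; simp only [Bool.false_eq_true, if_false, aC, bC, cC, hi, if_true]
              have hc := c2 h'
              rw [show -(i.val:ℝ) * (2/(4*(k:ℝ)-1)) + 1 * (1/2:ℝ)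
                  = (4*(k:ℝ)-1-4*(i.val:ℝ))/(2*(4*(k:ℝ)-1)) by field_simp; ring]
              apply div_neg_of_neg_of_pos
              · linarith
              · linarith
          · have hb : dkb n k false i = false := by simp [dkb, hi]
            rw [hb]; simp only [Bool.false_eq_true, if_false, aC, bC, cC, hi, if_false]
            norm_num
    · -- ukb k false : witness (-2, -(2k-1/2)), y ≤ -3/2 < 1
      obtain ⟨k, hk, rfl⟩ := Finset.mem_image.1 hs'
      rw [Finset.mem_Icc] at hk
      refine ⟨((-2:ℝ), -(2*(k:ℝ) - 1/2)), ?_⟩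
      intro i
      by_cases hi : i.val < n-1
      · rcases Nat.lt_or_ge i.val k with h' | h'
        · have hb : ukb n k false i = false := by simp [ukb, hi]; omega
          rw [hb]; simp only [Bool.false_eq_true, if_false, aC, bC, cC, hi, if_true]
          have := c1 h'; simp; linarith
        · have hb : ukb n k false i = true := by simp [ukb, hi, h']
          rw [hb]; simp only [if_true, aC, bC, cC, hi]
          have := c2 h'; simp; linarith
      · have hb : ukb n k false i = false := by simp [ukb, hi]
        rw [hb]; simp only [Bool.false_eq_true, if_false, aC, bC, cC, hi, if_false]
        have : (1:ℝ) ≤ (k:ℝ) := by exact_mod_cast hk.1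
        simp; linarith

theorem SD_card (hn : 3 ≤ n) : (SD n).card = 3*n-2 := by
  have hdisj1 : Disjoint ((Finset.range n).image (fun k => dkb n k true))
      ((Finset.range n).image (fun k => dkb n k false)) := by
    rw [Finset.disjoint_left]
    rintro a ha hb
    obtain ⟨k1, hk1, rfl⟩ := Finset.mem_image.1 ha
    obtain ⟨k2, hk2, he⟩ := Finset.mem_image.1 hb
    rw [Finset.mem_range] at hk1 hk2
    have := (dkb_inj (show (1:ℕ) ≤ n by omega) (show k1 ≤ n-1 by omega)
      (show k2 ≤ n-1 by omega) he.symm).2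
    simp at this
  have hdisj2 : Disjoint (((Finset.range n).image (fun k => dkb n k true)) ∪
      ((Finset.range n).image (fun k => dkb n k false)))
      ((Finset.Icc 1 (n-2)).image (fun k => ukb n k false)) := by
    rw [Finset.disjoint_left]
    rintro a ha hb
    obtain ⟨k2, hk2, he⟩ := Finset.mem_image.1 hb
    rw [Finset.mem_Icc] at hk2
    rcases Finset.mem_union.1 ha with h | h
    · obtain ⟨k1, hk1, rfl⟩ := Finset.mem_image.1 h
      exact dkb_ne_ukb hn hk2.1 hk2.2 he.symm
    · obtain ⟨k1, hk1, rfl⟩ := Finset.mem_image.1 h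
      exact dkb_ne_ukb hn hk2.1 hk2.2 he.symm
  have hi1 : ∀ b : Bool, Set.InjOn (fun k => dkb n k b) (Finset.range n) := by
    intro b k1 h1 k2 h2 h
    rw [Finset.mem_coe, Finset.mem_range] at h1 h2
    exact (dkb_inj (by omega) (by omega) (by omega) h).1
  have hi2 : Set.InjOn (fun k => ukb n k false) (Finset.Icc 1 (n-2)) := by
    intro k1 h1 k2 h2 h
    rw [Finset.mem_coe, Finset.mem_Icc] at h1 h2
    exact ukb_inj (by omega) (by omega) (by omega) h
  unfold SD
  rw [Finset.card_union_of_disjoint hdisj2, Finset.card_union_of_disjoint hdisj1,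
    Finset.card_image_of_injOn (hi1 true), Finset.card_image_of_injOn (hi1 false),
    Finset.card_image_of_injOn hi2, Finset.card_range, Nat.card_Icc]
  omega

theorem SC_card (hn : 3 ≤ n) : (SC n).card = 3*n-3 := by
  have hdisj1 : Disjoint ((Finset.Icc 1 (n-1)).image (fun k => dkb n k true))
      ((Finset.range n).image (fun k => dkb n k false)) := by
    rw [Finset.disjoint_left]
    rintro a ha hb
    obtain ⟨k1, hk1, rfl⟩ := Finset.mem_image.1 ha
    obtain ⟨k2, hk2, he⟩ := Finset.mem_image.1 hb
    rw [Finset.mem_Icc] at hk1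
    rw [Finset.mem_range] at hk2
    have := (dkb_inj (by omega) (by omega : k1 ≤ n-1) (by omega : k2 ≤ n-1) he.symm).2
    simp at this
  have hdisj2 : Disjoint (((Finset.Icc 1 (n-1)).image (fun k => dkb n k true)) ∪
      ((Finset.range n).image (fun k => dkb n k false)))
      ((Finset.Icc 1 (n-2)).image (fun k => ukb n k false)) := by
    rw [Finset.disjoint_left]
    rintro a ha hb
    obtain ⟨k2, hk2, he⟩ := Finset.mem_image.1 hb
    rw [Finset.mem_Icc] at hk2
    rcases Finset.mem_union.1 ha with h | h
    · obtain ⟨k1, hk1, rfl⟩ := Finset.mem_image.1 h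
      exact dkb_ne_ukb hn hk2.1 hk2.2 he.symm
    · obtain ⟨k1, hk1, rfl⟩ := Finset.mem_image.1 h
      exact dkb_ne_ukb hn hk2.1 hk2.2 he.symm
  have hi1 : ∀ (b : Bool) (T : Finset ℕ), (∀ k ∈ T, k ≤ n-1) → Set.InjOn (fun k => dkb n k b) T := by
    intro b T hT k1 h1 k2 h2 h
    rw [Finset.mem_coe] at h1 h2
    exact (dkb_inj (by omega) (hT _ h1) (hT _ h2) h).1
  have hi2 : Set.InjOn (fun k => ukb n k false) (Finset.Icc 1 (n-2)) := by
    intro k1 h1 k2 h2 h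
    rw [Finset.mem_coe, Finset.mem_Icc] at h1 h2
    exact ukb_inj (by omega) (by omega) (by omega) h
  unfold SC
  rw [Finset.card_union_of_disjoint hdisj2, Finset.card_union_of_disjoint hdisj1,
    Finset.card_image_of_injOn (hi1 true _ (fun k hk => by rw [Finset.mem_Icc] at hk; omega)),
    Finset.card_image_of_injOn (hi1 false _ (fun k hk => by rw [Finset.mem_range] at hk; omega)),
    Finset.card_image_of_injOn hi2, Finset.card_range, Nat.card_Icc, Nat.card_Icc]
  omega

theorem nsq_pos {A B : ℝ} (h : ¬(A = 0 ∧ B = 0)) : 0 < A^2 + B^2 := by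
  rcases not_and_or.1 h with h | h
  · have : 0 < A^2 := by positivity
    nlinarith [sq_nonneg B]
  · have : 0 < B^2 := by positivity
    nlinarith [sq_nonneg A]

theorem perturb_mem {U : Set (ℝ × ℝ)} (hU : IsOpen U) {p : ℝ × ℝ} (hp : p ∈ U) (A B : ℝ) :
    ∃ δ : ℝ, 0 < δ ∧ (p.1 + δ * A, p.2 + δ * B) ∈ U ∧ (p.1 - δ * A, p.2 - δ * B) ∈ U := by
  obtain ⟨ε, hε, hball⟩ := Metric.isOpen_iff.1 hU p hp
  set δ := ε / (2 * (|A| + |B| + 1)) with hδ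
  have hd : 0 < |A| + |B| + 1 := by positivity
  have hδpos : 0 < δ := by positivity
  have hkey : ∀ x y : ℝ, |x - y| = |x - y| := fun _ _ => rfl
  have hbound : δ * (|A| + |B| + 1) = ε / 2 := by
    rw [hδ, div_mul_eq_mul_div, div_eq_div_iff (by positivity) (by norm_num)]; ring
  have hA : |δ * A| < ε := by
    rw [abs_mul, abs_of_pos hδpos]
    nlinarith [abs_nonneg A, abs_nonneg B, hδpos]
  have hB : |δ * B| < ε := by
    rw [abs_mul, abs_of_pos hδpos]
    nlinarith [abs_nonneg A, abs_nonneg B, hδpos]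
  refine ⟨δ, hδpos, hball ?_, hball ?_⟩ <;>
  · rw [Metric.mem_ball, Prod.dist_eq]
    simp only [Real.dist_eq]
    apply max_lt <;> [skip; skip] <;>
    first
    | (rw [show p.1 + δ * A - p.1 = δ * A by ring]; exact hA)
    | (rw [show p.2 + δ * B - p.2 = δ * B by ring]; exact hB)
    | (rw [show p.1 - δ * A - p.1 = -(δ * A) by ring, abs_neg]; exact hA)
    | (rw [show p.2 - δ * B - p.2 = -(δ * B) by ring, abs_neg]; exact hB)

/-- a nonempty open set is not contained in a line -/
theorem not_subset_line {U : Set (ℝ × ℝ)} (hU : IsOpen U) (hne : U.Nonempty)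
    {A B C : ℝ} (hAB : ¬(A = 0 ∧ B = 0)) : ¬ U ⊆ fl A B C := by
  intro hsub
  obtain ⟨p, hp⟩ := hne
  obtain ⟨δ, hδpos, hmem, _⟩ := perturb_mem hU hp A B
  have h1 : A * p.1 + B * p.2 = C := hsub hp
  have h2 : A * (p.1 + δ * A) + B * (p.2 + δ * B) = C := hsub hmem
  have h3 : δ * (A^2 + B^2) = 0 := by nlinarith
  have := nsq_pos hAB
  nlinarith

/-- two distinct common points force two lines to be equal -/
theorem line_eq_of_two_points {a b c A B C : ℝ} (hab : ¬(a = 0 ∧ b = 0)) (hAB : ¬(A = 0 ∧ B = 0))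
    {p q : ℝ × ℝ} (hpq : p ≠ q) (hp1 : p ∈ fl a b c) (hq1 : q ∈ fl a b c)
    (hp2 : p ∈ fl A B C) (hq2 : q ∈ fl A B C) : fl a b c = fl A B C := by
  have hd : ¬(q.1 - p.1 = 0 ∧ q.2 - p.2 = 0) := by
    rintro ⟨h1, h2⟩
    apply hpq
    have e1 : p.1 = q.1 := by linarith
    have e2 : p.2 = q.2 := by linarith
    exact Prod.ext e1 e2
  simp only [fl, Set.mem_setOf_eq] at hp1 hq1 hp2 hq2
  have e1 : a * (q.1 - p.1) + b * (q.2 - p.2) = 0 := by linarith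
  have e2 : A * (q.1 - p.1) + B * (q.2 - p.2) = 0 := by linarith
  have cross : a * B - A * b = 0 := by
    rcases not_and_or.1 hd with h | h
    · have hz : (a * B - A * b) * (q.1 - p.1) = 0 := by linear_combination B*e1 - b*e2
      rcases mul_eq_zero.1 hz with h' | h'
      · exact h'
      · exact absurd h' h
    · have hz : (a * B - A * b) * (q.2 - p.2) = 0 := by linear_combination a*e2 - A*e1
      rcases mul_eq_zero.1 hz with h' | h'
      · exact h'
      · exact absurd h' h
  -- now exhibit λ with (a,b,c) = λ (A,B,C)
  have key : ∃ l : ℝ, l ≠ 0 ∧ a = l * A ∧ b = l * B ∧ c = l * C := by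
    by_cases hBz : B = 0
    · have hAz : A ≠ 0 := fun h => hAB ⟨h, hBz⟩
      have hbz : b = 0 := by
        have : a * B = A * b := by linarith
        rw [hBz] at this
        simp at this
        rcases this with h | h
        · exact absurd h hAz
        · exact h
      have haz : a ≠ 0 := fun h => hab ⟨h, hbz⟩
      refine ⟨a / A, div_ne_zero haz hAz, by field_simp, by rw [hBz, hbz]; ring, ?_⟩
      have : c = a * p.1 + b * p.2 := hp1.symm
      have hC : C = A * p.1 + B * p.2 := hp2.symm
      rw [this, hC, hbz, hBz]
      field_simp
      ring
    · have hlb : a = (b / B) * A := by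
        field_simp
        linarith
      have hbz : b ≠ 0 := by
        intro h
        apply hab
        refine ⟨?_, h⟩
        rw [h] at hlb
        simpa using hlb
      refine ⟨b / B, div_ne_zero hbz hBz, hlb, by field_simp, ?_⟩
      have : c = a * p.1 + b * p.2 := hp1.symm
      have hC : C = A * p.1 + B * p.2 := hp2.symm
      rw [this, hC, hlb]
      field_simp
  obtain ⟨l, hl, ha, hb, hc⟩ := key
  ext x
  simp only [fl, Set.mem_setOf_eq, ha, hb, hc]
  constructor
  · intro h
    have : l * (A * x.1 + B * x.2 - C) = 0 := by linarith
    rcases mul_eq_zero.1 this with h' | h'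
    · exact absurd h' hl
    · linarith
  · intro h
    linear_combination l * h



theorem exists_point_on_line_off_lines {m : ℕ} (A B C : ℝ) (hAB : ¬(A=0∧B=0))
    (a b c : Fin m → ℝ) (hab : ∀ i, ¬(a i = 0 ∧ b i = 0))
    (hne : ∀ i, fl (a i) (b i) (c i) ≠ fl A B C) :
    ∃ q ∈ fl A B C, ∀ i, q ∉ fl (a i) (b i) (c i) := by
  have hNpos : 0 < A^2 + B^2 := nsq_pos hAB
  set γ : ℝ → ℝ × ℝ := fun t => (A*C/(A^2+B^2) - t*B, B*C/(A^2+B^2) + t*A) with hγ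
  have hγline : ∀ t, γ t ∈ fl A B C := by
    intro t
    simp only [fl, Set.mem_setOf_eq, hγ]
    field_simp
    ring
  have hγinj : ∀ t t', γ t = γ t' → t = t' := by
    intro t t' h
    have h1 := congrArg Prod.fst h
    have h2 := congrArg Prod.snd h
    simp only [hγ] at h1 h2
    rcases not_and_or.1 hAB with hA | hB
    · have : t * A = t' * A := by linarith
      exact mul_right_cancel₀ hA this
    · have : t * B = t' * B := by linarith
      exact mul_right_cancel₀ hB this
  have hT : ∀ i, {t : ℝ | γ t ∈ fl (a i) (b i) (c i)}.Subsingleton := by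
    intro i t ht t' ht'
    by_contra hne'
    exact hne i (line_eq_of_two_points (hab i) hAB
      (fun he => hne' (hγinj _ _ he)) ht ht' (hγline t) (hγline t'))
  have hfin : (⋃ i, {t : ℝ | γ t ∈ fl (a i) (b i) (c i)}).Finite :=
    Set.finite_iUnion (fun i => (hT i).finite)
  obtain ⟨t0, ht0⟩ := (hfin.infinite_compl).nonempty
  refine ⟨γ t0, hγline t0, fun i hi => ?_⟩
  exact ht0 (Set.mem_iUnion.2 ⟨i, hi⟩)

theorem lb_induction : ∀ (n : ℕ) (a b c : Fin n → ℝ), (∀ i, ¬(a i = 0 ∧ b i = 0)) →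
    (∀ i j, i ≠ j → fl (a i) (b i) (c i) ≠ fl (a j) (b j) (c j)) →
    ∃ S : Finset (Fin n → Bool), n + 1 ≤ S.card ∧ ∀ s ∈ S, (acell a b c s).Nonempty := by
  intro n
  induction n with
  | zero =>
    intro a b c _ _
    refine ⟨Finset.univ, ?_, ?_⟩
    · rw [Finset.card_univ]
      simp
    · intro s _
      exact ⟨(0,0), fun i => i.elim0⟩
  | succ n ih =>
    intro a b c hab hdist
    classical
    set a' : Fin n → ℝ := fun j => a j.castSucc with ha'
    set b' : Fin n → ℝ := fun j => b j.castSucc with hb'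
    set c' : Fin n → ℝ := fun j => c j.castSucc with hc'
    obtain ⟨S', hS'card, hS'ne⟩ := ih a' b' c' (fun j => hab _)
      (fun i j hij => hdist _ _ (fun h => hij (Fin.castSucc_injective n h)))
    set L := Fin.last n with hL
    have hexists : ∀ s ∈ S', ∃ p, p ∈ acell a' b' c' s ∧ p ∉ fl (a L) (b L) (c L) := by
      intro s hs
      by_contra hcon
      push_neg at hcon
      exact not_subset_line (acell_open a' b' c' s) (hS'ne s hs) (hab L)
        (fun p hp => hcon p hp)
    set extbit : (Fin n → Bool) → Bool := fun s =>
      if h : ∃ p, p ∈ acell a' b' c' s ∧ p ∉ fl (a L) (b L) (c L)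
      then decide (c L < a L * h.choose.1 + b L * h.choose.2) else true
      with hextbit
    set ext : (Fin n → Bool) → (Fin (n+1) → Bool) := fun s => Fin.snoc s (extbit s) with hext
    have hext_castSucc : ∀ s (j : Fin n), ext s (Fin.castSucc j) = s j := by
      intro s j
      simp only [hext, Fin.snoc_castSucc]
    have hext_last : ∀ s, ext s (Fin.last n) = extbit s := by
      intro s
      simp only [hext, Fin.snoc_last]
    have hext_cell : ∀ s ∈ S', (acell a b c (ext s)).Nonempty := by
      intro s hs
      have h := hexists s hs
      refine ⟨h.choose, ?_⟩
      have hp := h.choose_spec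
      intro i
      refine Fin.lastCases ?_ (fun j => ?_) i
      · rw [hext_last, hextbit]
        simp only [dif_pos h]
        by_cases hlt : c L < a L * h.choose.1 + b L * h.choose.2
        · simp only [decide_eq_true hlt, if_true]
          exact hlt
        · have hlt2 : a L * h.choose.1 + b L * h.choose.2 < c L :=
            lt_of_le_of_ne (not_lt.1 hlt) (fun he => hp.2 he)
          simp only [decide_eq_false hlt, Bool.false_eq_true, if_false]
          exact hlt2
      · rw [hext_castSucc]
        exact hp.1 j
    have hlastne : ∀ j : Fin n, fl (a' j) (b' j) (c' j) ≠ fl (a L) (b L) (c L) :=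
      fun j => hdist _ _ (Fin.castSucc_lt_last j).ne
    obtain ⟨q, hqline, hqoff⟩ := exists_point_on_line_off_lines (a L) (b L) (c L) (hab L)
      a' b' c' (fun j => hab _) hlastne
    have hqK : ∀ j, a' j * q.1 + b' j * q.2 ≠ c' j := fun j he => hqoff j he
    set u := sgn a' b' c' q with hu
    have hqu : q ∈ acell a' b' c' u := mem_acell_sgn hqK
    obtain ⟨δ, hδpos, hmem1, hmem2⟩ := perturb_mem (acell_open a' b' c' u) hqu (a L) (b L)
    have hCq : a L * q.1 + b L * q.2 = c L := hqline
    have hNpos : 0 < (a L)^2 + (b L)^2 := nsq_pos (hab L)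
    have hvT : (acell a b c (Fin.snoc u true)).Nonempty := by
      refine ⟨(q.1 + δ * a L, q.2 + δ * b L), ?_⟩
      intro i
      refine Fin.lastCases ?_ (fun j => ?_) i
      · rw [Fin.snoc_last]
        simp only [if_true]
        nlinarith
      · rw [Fin.snoc_castSucc]
        exact hmem1 j
    have hvF : (acell a b c (Fin.snoc u false)).Nonempty := by
      refine ⟨(q.1 - δ * a L, q.2 - δ * b L), ?_⟩
      intro i
      refine Fin.lastCases ?_ (fun j => ?_) i
      · rw [Fin.snoc_last]
        simp only [Bool.false_eq_true, if_false]
        nlinarith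
      · rw [Fin.snoc_castSucc]
        exact hmem2 j
    have hext_inj : Function.Injective ext := by
      intro s t h
      funext j
      have := congrFun h (Fin.castSucc j)
      rwa [hext_castSucc, hext_castSucc] at this
    set T := S'.image ext with hT
    have hTcard : T.card = S'.card := Finset.card_image_of_injective _ hext_inj
    have honeof : (Fin.snoc u true : Fin (n+1) → Bool) ∉ T ∨ (Fin.snoc u false : Fin (n+1) → Bool) ∉ T := by
      by_contra hcon
      push_neg at hcon
      obtain ⟨s1, hs1, he1⟩ := Finset.mem_image.1 hcon.1
      obtain ⟨s2, hs2, he2⟩ := Finset.mem_image.1 hcon.2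
      have h1 : s1 = u := by
        funext j
        have := congrFun he1 (Fin.castSucc j)
        rwa [hext_castSucc, Fin.snoc_castSucc] at this
      have h2 : s2 = u := by
        funext j
        have := congrFun he2 (Fin.castSucc j)
        rwa [hext_castSucc, Fin.snoc_castSucc] at this
      rw [h1] at he1; rw [h2] at he2
      have := congrFun (he1.symm.trans he2) (Fin.last n)
      rw [Fin.snoc_last, Fin.snoc_last] at this
      simp at this
    set w := if (Fin.snoc u true : Fin (n+1) → Bool) ∈ T then (Fin.snoc u false : Fin (n+1) → Bool) else (Fin.snoc u true : Fin (n+1) → Bool) with hw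
    have hwnot : w ∉ T := by
      by_cases hmem : (Fin.snoc u true : Fin (n+1) → Bool) ∈ T
      · rw [hw, if_pos hmem]
        rcases honeof with h | h
        · exact absurd hmem h
        · exact h
      · rw [hw, if_neg hmem]
        exact hmem
    have hwne : (acell a b c w).Nonempty := by
      by_cases hmem : (Fin.snoc u true : Fin (n+1) → Bool) ∈ T
      · rw [hw, if_pos hmem]; exact hvF
      · rw [hw, if_neg hmem]; exact hvT
    refine ⟨insert w T, ?_, ?_⟩
    · rw [Finset.card_insert_of_notMem hwnot, hTcard]
      omega
    · intro s hs
      rcases Finset.mem_insert.1 hs with rfl | hs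
      · exact hwne
      · obtain ⟨s', hs', rfl⟩ := Finset.mem_image.1 hs
        exact hext_cell s' hs'

theorem regionCount_formula (a b c : Fin n → ℝ) :
    regionCount (⋃ i, fl (a i) (b i) (c i)) = Nat.card {s : Fin n → Bool // (acell a b c s).Nonempty} :=
  card_components a b c

theorem mem_Lset_of (a b c : Fin n → ℝ) (hab : ∀ i, ¬(a i = 0 ∧ b i = 0))
    (hinj : Function.Injective fun i => fl (a i) (b i) (c i)) :
    regionCount (⋃ i, fl (a i) (b i) (c i)) ∈ Lset n := by
  refine ⟨fun i => fl (a i) (b i) (c i), fun i => ⟨a i, b i, c i, ?_, rfl⟩, hinj, rfl⟩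
  intro h
  rw [Prod.mk.injEq] at h
  exact hab i ⟨h.1, h.2⟩

theorem inj_par : Function.Injective fun i : Fin n => fl 0 1 ((i.val : ℝ)) := by
  intro i j h
  have hmem : ((0:ℝ), (i.val:ℝ)) ∈ fl 0 1 ((i.val : ℝ)) := by simp [fl]
  have h' : fl 0 1 ((i.val:ℝ)) = fl 0 1 ((j.val:ℝ)) := h
  rw [h'] at hmem
  simp [fl] at hmem
  exact Fin.ext (by exact_mod_cast hmem)

theorem inj_conc : Function.Injective fun i : Fin n => fl (-(i.val:ℝ)) 1 0 := by
  intro i j h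
  have hmem : ((1:ℝ), (i.val:ℝ)) ∈ fl (-(i.val:ℝ)) 1 0 := by simp [fl]
  have h' : fl (-(i.val:ℝ)) 1 0 = fl (-(j.val:ℝ)) 1 0 := h
  rw [h'] at hmem
  simp [fl] at hmem
  have hr : (i.val:ℝ) = (j.val:ℝ) := by linarith
  exact Fin.ext (by exact_mod_cast hr)

theorem inj_D (hn : 3 ≤ n) : Function.Injective fun i : Fin n => fl (aD n i) (bD n i) (cD n i) := by
  have key : ∀ i j : Fin n, i.val < n-1 → fl (aD n i) (bD n i) (cD n i) = fl (aD n j) (bD n j) (cD n j) → i = j := by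
    intro i j hi h
    have hmem : ((2:ℝ), 2*(i.val:ℝ)) ∈ fl (aD n i) (bD n i) (cD n i) := by
      simp [fl, aD, bD, cD, hi]; ring
    rw [h] at hmem
    by_cases hj : j.val < n-1
    · simp [fl, aD, bD, cD, hj] at hmem
      have hr : (i.val:ℝ) = (j.val:ℝ) := by linarith
      exact Fin.ext (by exact_mod_cast hr)
    · simp [fl, aD, bD, cD, hj] at hmem
  intro i j h
  by_cases hi : i.val < n-1
  · exact key i j hi h
  · by_cases hj : j.val < n-1
    · exact (key j i hj h.symm).symm
    · exact Fin.ext (by omega)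

theorem inj_C (hn : 3 ≤ n) : Function.Injective fun i : Fin n => fl (aC n i) (bC n i) (cC n i) := by
  have key : ∀ i j : Fin n, i.val < n-1 → fl (aC n i) (bC n i) (cC n i) = fl (aC n j) (bC n j) (cC n j) → i = j := by
    intro i j hi h
    have hmem : ((2:ℝ), 2*(i.val:ℝ)) ∈ fl (aC n i) (bC n i) (cC n i) := by
      simp [fl, aC, bC, cC, hi]; ring
    rw [h] at hmem
    by_cases hj : j.val < n-1
    · simp [fl, aC, bC, cC, hj] at hmem
      have hr : (i.val:ℝ) = (j.val:ℝ) := by linarith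
      exact Fin.ext (by exact_mod_cast hr)
    · simp [fl, aC, bC, cC, hj] at hmem
      have : (2 * i.val : ℕ) = 1 := by exact_mod_cast hmem
      omega
  intro i j h
  by_cases hi : i.val < n-1
  · exact key i j hi h
  · by_cases hj : j.val < n-1
    · exact (key j i hj h.symm).symm
    · exact Fin.ext (by omega)

end Aux

/-- For `n ≥ 3`, `Lset n` contains `n+1`, `2n`, `3n-3`, `3n-2`, and `n+1` is its
minimum. -/
theorem stmt14 (n : ℕ) (hn : 3 ≤ n) :
    n + 1 ∈ Lset n ∧ 2 * n ∈ Lset n ∧ 3 * n - 3 ∈ Lset n ∧ 3 * n - 2 ∈ Lset n ∧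
      ∀ f ∈ Lset n, n + 1 ≤ f := by
  refine ⟨?_, ?_, ?_, ?_, ?_⟩
  · have h := Aux.mem_Lset_of (n := n) (fun _ => (0:ℝ)) (fun _ => (1:ℝ)) (fun i => (i.val:ℝ))
      (fun i hz => by simpa using hz.2) Aux.inj_par
    rwa [Aux.regionCount_formula, Aux.par_count] at h
  · have h := Aux.mem_Lset_of (n := n) (fun i => -(i.val:ℝ)) (fun _ => (1:ℝ)) (fun _ => (0:ℝ))
      (fun i hz => by simpa using hz.2) Aux.inj_conc
    rwa [Aux.regionCount_formula, Aux.conc_count (by omega)] at h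
  · have hab : ∀ i : Fin n, ¬(Aux.aC n i = 0 ∧ Aux.bC n i = 0) := by
      intro i hz
      have := hz.2
      simp [Aux.bC] at this
    have h := Aux.mem_Lset_of (n := n) (Aux.aC n) (Aux.bC n) (Aux.cC n) hab (Aux.inj_C hn)
    rwa [Aux.regionCount_formula, Aux.card_subtype_eq (Aux.C_char hn), Aux.SC_card hn] at h
  · have hab : ∀ i : Fin n, ¬(Aux.aD n i = 0 ∧ Aux.bD n i = 0) := by
      intro i hz
      rcases hz with ⟨h1, h2⟩
      by_cases hi : i.val < n-1
      · simp [Aux.bD, hi] at h2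
      · simp [Aux.aD, hi] at h1
    have h := Aux.mem_Lset_of (n := n) (Aux.aD n) (Aux.bD n) (Aux.cD n) hab (Aux.inj_D hn)
    rwa [Aux.regionCount_formula, Aux.card_subtype_eq (Aux.D_char hn), Aux.SD_card hn] at h
  · rintro f ⟨ℓ, hline, hinj, rfl⟩
    choose a b c hab hset using hline
    have hUeq : (⋃ i, ℓ i) = ⋃ i, Aux.fl (a i) (b i) (c i) := by
      apply Set.iUnion_congr
      intro i
      exact hset i
    rw [hUeq, Aux.regionCount_formula]
    obtain ⟨S, hcard, hne⟩ := Aux.lb_induction n a b c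
      (fun i hz => hab i (by rw [Prod.mk.injEq]; exact ⟨hz.1, hz.2⟩))
      (fun i j hij he => hij (hinj (by rw [hset i, hset j]; exact he)))
    calc n + 1 ≤ S.card := hcard
    _ ≤ Nat.card {s : Fin n → Bool // (Aux.acell a b c s).Nonempty} := by
        rw [← Nat.card_eq_finsetCard]
        exact Nat.card_le_card_of_injective
          (fun x : ↥S => (⟨x.1, hne x.1 x.2⟩ : {s // (Aux.acell a b c s).Nonempty}))
          (fun x y h => by
            simp only [Subtype.mk.injEq] at h
            exact Subtype.val_injective h)
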